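/- Let $m \geq 2$ and let $k$ be any field. Let $\mathcal{H}_m \otimes k$ be the higher Heisenberg Lie algebra over $k$ with basis $x_1,\dots,x_m,y_1,\dots,y_m,z$ and relations $[x_i,y_i] = z$ for all $i$ (all other basis brackets zero). Then $\mathcal{H}_m \otimes k$ is indecomposable: if $\mathcal{H}_m \otimes k = M_1 \oplus M_2$ as a direct sum of Lie ideals, then $M_1 = 0$ or $M_2 = 0$. -/

import Mathlib

/-- the higher Heisenberg Lie algebra `𝓗_m ⊗ k` (basis
`x₁,…,x_m,y₁,…,y_m,z` with `[xᵢ,yᵢ] = z` and all other basis brackets zero) is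
indecomposable: it is not the direct sum of two nonzero Lie ideals. -/
theorem stmt4 (m : ℕ) (hm : 2 ≤ m) (k : Type*) [Field k]
    (L : Type*) [LieRing L] [LieAlgebra k L]
    (b : Module.Basis (Fin m ⊕ Fin m ⊕ Unit) k L)
    (x y : Fin m → L) (z : L)
    (hx : ∀ i, x i = b (Sum.inl i))
    (hy : ∀ i, y i = b (Sum.inr (Sum.inl i)))
    (hz : z = b (Sum.inr (Sum.inr ())))
    (hxy : ∀ i, ⁅x i, y i⁆ = z)
    (hxy' : ∀ i j, i ≠ j → ⁅x i, y j⁆ = 0)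
    (hxx : ∀ i j, ⁅x i, x j⁆ = 0)
    (hyy : ∀ i j, ⁅y i, y j⁆ = 0)
    (hxz : ∀ i, ⁅x i, z⁆ = 0)
    (hyz : ∀ i, ⁅y i, z⁆ = 0)
    (M₁ M₂ : LieIdeal k L) (hcompl : IsCompl M₁ M₂) :
    M₁ = ⊥ ∨ M₂ = ⊥ := by
  have hz0 : z ≠ 0 := hz ▸ b.ne_zero _
  -- brackets of basis elements lie in k ∙ z
  have hbb : ∀ u v : Fin m ⊕ Fin m ⊕ Unit, ⁅b u, b v⁆ ∈ Submodule.span k {z} := by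
    have hzx : ∀ i, ⁅z, x i⁆ = 0 := fun i => by
      rw [← lie_skew, hxz i, neg_zero]
    have hzy : ∀ i, ⁅z, y i⁆ = 0 := fun i => by
      rw [← lie_skew, hyz i, neg_zero]
    have hyx : ∀ i j, ⁅y i, x j⁆ ∈ Submodule.span k {z} := by
      intro i j
      rw [← neg_neg ⁅y i, x j⁆, lie_skew]
      by_cases h : j = i
      · subst h; rw [hxy]; exact Submodule.neg_mem _ (Submodule.mem_span_singleton_self z)
      · rw [hxy' _ _ h, neg_zero]; exact Submodule.zero_mem _
    rintro (i | i | ⟨⟩) (j | j | ⟨⟩) <;>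
      simp only [← hx, ← hy, ← hz]
    · rw [hxx]; exact Submodule.zero_mem _
    · by_cases h : i = j
      · subst h; rw [hxy]; exact Submodule.mem_span_singleton_self z
      · rw [hxy' _ _ h]; exact Submodule.zero_mem _
    · rw [hxz]; exact Submodule.zero_mem _
    · exact hyx i j
    · rw [hyy]; exact Submodule.zero_mem _
    · rw [hyz]; exact Submodule.zero_mem _
    · rw [hzx]; exact Submodule.zero_mem _
    · rw [hzy]; exact Submodule.zero_mem _
    · rw [lie_self]; exact Submodule.zero_mem _
  -- derived subalgebra: all brackets lie in k ∙ z
  have hder : ∀ a c : L, ⁅a, c⁆ ∈ Submodule.span k {z} := by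
    intro a c
    have ha : a ∈ Submodule.span k (Set.range b) := by rw [b.span_eq]; trivial
    have hc : c ∈ Submodule.span k (Set.range b) := by rw [b.span_eq]; trivial
    induction ha using Submodule.span_induction with
    | mem a hmem =>
      induction hc using Submodule.span_induction with
      | mem c hmem' =>
        obtain ⟨u, rfl⟩ := hmem
        obtain ⟨v, rfl⟩ := hmem'
        exact hbb u v
      | zero => rw [lie_zero]; exact Submodule.zero_mem _
      | add c d _ _ h1 h2 => rw [lie_add]; exact Submodule.add_mem _ h1 h2
      | smul t c _ h1 => rw [lie_smul]; exact Submodule.smul_mem _ _ h1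
    | zero => rw [zero_lie]; exact Submodule.zero_mem _
    | add a d _ _ h1 h2 => rw [add_lie]; exact Submodule.add_mem _ h1 h2
    | smul t a _ h1 => rw [smul_lie]; exact Submodule.smul_mem _ _ h1
  -- bracket with x i / y i extracts coordinates
  have hadx : ∀ (i : Fin m) (w : L), ⁅x i, w⁆ = b.repr w (Sum.inr (Sum.inl i)) • z := by
    intro i
    have : (LieAlgebra.ad k L (x i) : L →ₗ[k] L)
        = (LinearMap.toSpanSingleton k L z).comp
            ((Finsupp.lapply (Sum.inr (Sum.inl i))).comp b.repr.toLinearMap) := by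
      apply b.ext
      rintro (j | j | ⟨⟩) <;>
        simp only [LieAlgebra.ad_apply, LinearMap.coe_comp, Function.comp_apply,
          LinearEquiv.coe_coe, Module.Basis.repr_self, Finsupp.lapply_apply, Finsupp.single_apply,
          LinearMap.toSpanSingleton_apply]
      · rw [← hx, hxx, if_neg (by simp), zero_smul]
      · by_cases h : i = j
        · subst h; rw [← hy, hxy, if_pos rfl, one_smul]
        · rw [← hy, hxy' _ _ h, if_neg (by simpa using Ne.symm h), zero_smul]
      · rw [← hz, hxz, if_neg (by simp), zero_smul]
    intro w
    have := congrFun (congrArg (fun f : L →ₗ[k] L => (f : L → L)) this) w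
    simpa [LieAlgebra.ad_apply, LinearMap.toSpanSingleton_apply] using this
  have hady : ∀ (i : Fin m) (w : L), ⁅y i, w⁆ = -(b.repr w (Sum.inl i)) • z := by
    intro i
    have : (LieAlgebra.ad k L (y i) : L →ₗ[k] L)
        = (LinearMap.toSpanSingleton k L (-z)).comp
            ((Finsupp.lapply (Sum.inl i)).comp b.repr.toLinearMap) := by
      apply b.ext
      rintro (j | j | ⟨⟩) <;>
        simp only [LieAlgebra.ad_apply, LinearMap.coe_comp, Function.comp_apply,
          LinearEquiv.coe_coe, Module.Basis.repr_self, Finsupp.lapply_apply, Finsupp.single_apply,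
          LinearMap.toSpanSingleton_apply]
      · by_cases h : j = i
        · subst h
          rw [← hx, ← neg_neg ⁅y j, x j⁆, lie_skew, hxy, if_pos rfl, one_smul]
        · rw [← hx, ← neg_neg ⁅y i, x j⁆, lie_skew, hxy' _ _ h, neg_zero,
            if_neg (by simpa using h), zero_smul]
      · rw [← hy, hyy, if_neg (by simp), zero_smul]
      · rw [← hz, hyz, if_neg (by simp), zero_smul]
    intro w
    have := congrFun (congrArg (fun f : L →ₗ[k] L => (f : L → L)) this) w
    simpa [LieAlgebra.ad_apply, LinearMap.toSpanSingleton_apply, neg_smul, smul_neg] using this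
  -- central elements lie in k ∙ z
  have hcent : ∀ w : L, (∀ v : L, ⁅w, v⁆ = 0) → w ∈ Submodule.span k {z} := by
    intro w hw
    have h1 : ∀ i : Fin m, b.repr w (Sum.inr (Sum.inl i)) = 0 := by
      intro i
      have : ⁅x i, w⁆ = 0 := by rw [← lie_skew, hw, neg_zero]
      rw [hadx i w] at this
      exact (smul_eq_zero.mp this).resolve_right hz0
    have h2 : ∀ i : Fin m, b.repr w (Sum.inl i) = 0 := by
      intro i
      have : ⁅y i, w⁆ = 0 := by rw [← lie_skew, hw, neg_zero]
      rw [hady i w] at this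
      have := (smul_eq_zero.mp this).resolve_right hz0
      simpa using this
    have hrepr : b.repr w = Finsupp.single (Sum.inr (Sum.inr ()))
        (b.repr w (Sum.inr (Sum.inr ()))) := by
      ext u
      rcases u with j | j | ⟨⟩
      · rw [h2 j, Finsupp.single_apply, if_neg (by simp)]
      · rw [h1 j, Finsupp.single_apply, if_neg (by simp)]
      · rw [Finsupp.single_apply, if_pos rfl]
    have : w = (b.repr w (Sum.inr (Sum.inr ()))) • z := by
      conv_lhs => rw [← b.repr.symm_apply_apply w, hrepr]
      rw [b.repr_symm_single, hz]
    rw [this]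
    exact Submodule.smul_mem _ _ (Submodule.mem_span_singleton_self z)
  -- cross brackets between disjoint ideals vanish
  have hcross : ∀ (N₁ N₂ : LieIdeal k L), N₁ ⊓ N₂ = ⊥ →
      ∀ a ∈ N₁, ∀ c ∈ N₂, ⁅a, c⁆ = 0 := by
    intro N₁ N₂ hinf a ha c hc
    have h1 : ⁅a, c⁆ ∈ N₂ := N₂.lie_mem hc
    have h2 : ⁅a, c⁆ ∈ N₁ := by
      rw [← neg_neg ⁅a, c⁆, lie_skew]
      exact N₁.neg_mem (N₁.lie_mem ha)
    have : ⁅a, c⁆ ∈ N₁ ⊓ N₂ := ⟨h2, h1⟩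
    rw [hinf] at this
    exact (LieSubmodule.mem_bot _).mp this
  -- main step: if z ∈ N₁ and N₁, N₂ complementary then N₂ = ⊥
  have keystep : ∀ (N₁ N₂ : LieIdeal k L), IsCompl N₁ N₂ → z ∈ N₁ → N₂ = ⊥ := by
    intro N₁ N₂ hc hzN
    have hinf : N₁ ⊓ N₂ = ⊥ := hc.inf_eq_bot
    have hznot : ∀ t : k, t • z ∈ N₂ → t = 0 := by
      intro t ht
      by_contra h
      have : z ∈ N₂ := by
        have := N₂.smul_mem t⁻¹ ht
        rwa [smul_smul, inv_mul_cancel₀ h, one_smul] at this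
      have : z ∈ N₁ ⊓ N₂ := ⟨hzN, this⟩
      rw [hinf] at this
      exact hz0 ((LieSubmodule.mem_bot _).mp this)
    rw [eq_bot_iff]
    intro w hw
    rw [LieSubmodule.mem_bot]
    have hwc : ∀ v : L, ⁅w, v⁆ = 0 := by
      intro v
      have hv : v ∈ N₁ ⊔ N₂ := by rw [hc.sup_eq_top]; trivial
      obtain ⟨v₁, hv₁, v₂, hv₂, rfl⟩ := (LieSubmodule.mem_sup N₁ N₂ v).mp hv
      rw [lie_add]
      have e1 : ⁅w, v₁⁆ = 0 := by
        rw [← lie_skew, hcross N₁ N₂ hinf v₁ hv₁ w hw, neg_zero]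
      have e2 : ⁅w, v₂⁆ = 0 := by
        have hm : ⁅w, v₂⁆ ∈ Submodule.span k {z} := hder w v₂
        obtain ⟨t, ht⟩ := Submodule.mem_span_singleton.mp hm
        have hmem : ⁅w, v₂⁆ ∈ N₂ := by
          rw [← neg_neg ⁅w, v₂⁆, lie_skew]
          exact N₂.neg_mem (N₂.lie_mem hw)
        rw [← ht] at hmem ⊢
        rw [hznot t hmem, zero_smul]
      rw [e1, e2, add_zero]
    have := hcent w hwc
    obtain ⟨t, ht⟩ := Submodule.mem_span_singleton.mp this
    have : w ∈ N₁ ⊓ N₂ := ⟨by rw [← ht]; exact N₁.smul_mem t hzN, hw⟩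
    rw [hinf] at this
    exact (LieSubmodule.mem_bot _).mp this
  -- decompose z = ⁅x 0, y 0⁆ into the two ideals
  have hsup : M₁ ⊔ M₂ = ⊤ := hcompl.sup_eq_top
  have hinf : M₁ ⊓ M₂ = ⊥ := hcompl.inf_eq_bot
  obtain ⟨a₁, ha₁, a₂, ha₂, hax⟩ := (LieSubmodule.mem_sup M₁ M₂ (x ⟨0, by omega⟩)).mp
    (by rw [hsup]; trivial)
  obtain ⟨c₁, hc₁, c₂, hc₂, hcy⟩ := (LieSubmodule.mem_sup M₁ M₂ (y ⟨0, by omega⟩)).mp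
    (by rw [hsup]; trivial)
  have hzdec : z = ⁅a₁, c₁⁆ + ⁅a₂, c₂⁆ := by
    have : z = ⁅(x ⟨0, by omega⟩ : L), y ⟨0, by omega⟩⁆ := (hxy _).symm
    rw [this, ← hax, ← hcy, add_lie, lie_add, lie_add,
      hcross M₁ M₂ hinf a₁ ha₁ c₂ hc₂,
      show ⁅a₂, c₁⁆ = 0 by
        rw [← lie_skew, hcross M₁ M₂ hinf c₁ hc₁ a₂ ha₂, neg_zero]]
    abel
  obtain ⟨s, hs⟩ := Submodule.mem_span_singleton.mp (hder a₁ c₁)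
  obtain ⟨t, ht⟩ := Submodule.mem_span_singleton.mp (hder a₂ c₂)
  have hst : s + t = 1 := by
    have : (s + t) • z = (1 : k) • z := by
      rw [add_smul, one_smul, hs, ht, ← hzdec]
    have h' : (s + t - 1) • z = 0 := by rw [sub_smul, this, sub_self]
    rcases smul_eq_zero.mp h' with h'' | h''
    · exact sub_eq_zero.mp h''
    · exact absurd h'' hz0
  by_cases hs0 : s = 0
  · -- t = 1, z ∈ M₂
    have ht1 : t = 1 := by rw [hs0, zero_add] at hst; exact hst
    have hzM2 : z ∈ M₂ := by
      have : ⁅a₂, c₂⁆ ∈ M₂ := M₂.lie_mem hc₂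
      rwa [← ht, ht1, one_smul] at this
    exact Or.inl (keystep M₂ M₁ hcompl.symm hzM2)
  · have hzM1 : z ∈ M₁ := by
      have hmem : ⁅a₁, c₁⁆ ∈ M₁ := M₁.lie_mem hc₁
      rw [← hs] at hmem
      have := M₁.smul_mem s⁻¹ hmem
      rwa [smul_smul, inv_mul_cancel₀ hs0, one_smul] at this
    exact Or.inr (keystep M₁ M₂ hcompl hzM1)
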